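/- arXiv:1203.5464 — 3 statements merged into one kernel-verified Lean document; each statement's English description precedes it below -/
import Mathlib

section
/- The function g(γ) = f(γ)/(3-γ), where f(γ) = -γ·ln(γ) - (1-γ)·ln(1-γ) is the binary entropy function, attains its maximum on the interval (0,1) at a unique point γ* with γ* ≤ 0.56985, and g(γ*) ≤ ln(1.7549)/2. -/
/-- The binary entropy function. -/
noncomputable def binEnt (γ : ℝ) : ℝ := -γ * Real.log γ - (1 - γ) * Real.log (1 - γ)

/-- `g γ = f γ / (3 - γ)`. -/
noncomputable def gfun (γ : ℝ) : ℝ := binEnt γ / (3 - γ)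

/-- Numerator of the derivative of `gfun`. -/
noncomputable def hfun (γ : ℝ) : ℝ := 2 * Real.log (1 - γ) - 3 * Real.log γ

lemma hasDerivAt_binEnt {x : ℝ} (hx0 : 0 < x) (hx1 : x < 1) :
    HasDerivAt binEnt (Real.log (1 - x) - Real.log x) x := by
  have h1 : HasDerivAt (fun y : ℝ => y * Real.log y) (Real.log x + 1) x :=
    Real.hasDerivAt_mul_log (ne_of_gt hx0)
  have h2 : HasDerivAt (fun y : ℝ => (1 - y) * Real.log (1 - y))
      (-(Real.log (1 - x) + 1)) x := by
    have hb : HasDerivAt (fun y : ℝ => 1 - y) (-1) x := by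
      simpa using (hasDerivAt_id x).const_sub (1:ℝ)
    have := (Real.hasDerivAt_mul_log (x := 1 - x) (by linarith)).comp x hb
    simpa [mul_comm, Function.comp_def] using this
  have h3 : HasDerivAt (fun y : ℝ => -(y * Real.log y) - (1 - y) * Real.log (1 - y))
      (-(Real.log x + 1) - -(Real.log (1 - x) + 1)) x := (h1.neg).sub h2
  have h4 : HasDerivAt binEnt (-(Real.log x + 1) - -(Real.log (1 - x) + 1)) x := by
    convert h3 using 2 with y
    simp only [binEnt]; ring
  convert h4 using 1
  ring

lemma hasDerivAt_gfun {x : ℝ} (hx0 : 0 < x) (hx1 : x < 1) :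
    HasDerivAt gfun (hfun x / (3 - x) ^ 2) x := by
  have hne : (3 - x) ≠ 0 := by linarith
  have hb : HasDerivAt (fun y : ℝ => 3 - y) (-1) x := by
    simpa using (hasDerivAt_id x).const_sub (3:ℝ)
  have := (hasDerivAt_binEnt hx0 hx1).div hb hne
  refine (this : HasDerivAt gfun _ x).congr_deriv ?_
  simp only [hfun, binEnt]
  ring

lemma hfun_anti {x y : ℝ} (hx0 : 0 < x) (hxy : x < y) (hy1 : y < 1) :
    hfun y < hfun x := by
  have l1 : Real.log (1 - y) < Real.log (1 - x) :=
    Real.log_lt_log (by linarith) (by linarith)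
  have l2 : Real.log x < Real.log y := Real.log_lt_log hx0 hxy
  unfold hfun; linarith

theorem gfun_max :
    ∃ γs ∈ Set.Ioo (0 : ℝ) 1,
      (∀ γ ∈ Set.Ioo (0 : ℝ) 1, gfun γ ≤ gfun γs) ∧
      (∀ γ' ∈ Set.Ioo (0 : ℝ) 1,
        (∀ γ ∈ Set.Ioo (0 : ℝ) 1, gfun γ ≤ gfun γ') → γ' = γs) ∧
      γs ≤ 0.56985 ∧ 2 * gfun γs ≤ Real.log 1.7549 := by
  set c : ℝ := 5698403 / 10000000 with hc
  set p : ℝ → ℝ := fun γ => γ ^ 3 - γ ^ 2 + 2 * γ - 1 with hp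
  have hcont : ContinuousOn p (Set.Icc (1/2 : ℝ) c) := by fun_prop
  have hiv := intermediate_value_Icc (by norm_num : (1/2 : ℝ) ≤ c) hcont
  have h0mem : (0 : ℝ) ∈ Set.Icc (p (1/2)) (p c) := by
    constructor <;> simp only [hp] <;> norm_num
  obtain ⟨γs, hγsIcc, hγs0⟩ := hiv h0mem
  obtain ⟨hhalf, hγsc⟩ := hγsIcc
  have hγs_pos : (0 : ℝ) < γs := by linarith
  have hγs_lt1 : γs < 1 := by
    have : c < 1 := by norm_num
    linarith
  -- the key polynomial identity: (1 - γs)^2 = γs^3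
  have hpoly : (1 - γs) ^ 2 = γs ^ 3 := by
    have : γs ^ 3 - γs ^ 2 + 2 * γs - 1 = 0 := hγs0
    nlinarith [this]
  have hfs : hfun γs = 0 := by
    have h2 : 2 * Real.log (1 - γs) = Real.log ((1 - γs) ^ 2) := by
      rw [Real.log_pow]; push_cast; ring
    have h3 : 3 * Real.log γs = Real.log (γs ^ 3) := by
      rw [Real.log_pow]; push_cast; ring
    rw [hfun, h2, h3, hpoly, sub_self]
  -- strict monotonicity on Ioc 0 γs
  have hmono : StrictMonoOn gfun (Set.Ioc 0 γs) := by
    apply StrictMonoOn.mono (s := Set.Ioc 0 γs) ?_ (le_refl _)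
    apply strictMonoOn_of_deriv_pos (convex_Ioc 0 γs)
    · intro x hx
      exact (hasDerivAt_gfun hx.1 (lt_of_le_of_lt hx.2 hγs_lt1)).continuousAt.continuousWithinAt
    · intro x hx
      rw [interior_Ioc] at hx
      have hx1 : x < 1 := lt_trans hx.2 hγs_lt1
      rw [(hasDerivAt_gfun hx.1 hx1).deriv]
      have hpos : 0 < hfun x := by
        have := hfun_anti hx.1 hx.2 hγs_lt1
        linarith [hfs ▸ this]
      have hsq : (0:ℝ) < (3 - x) ^ 2 := by nlinarith
      exact div_pos hpos hsq
  -- strict antitonicity on Ico γs 1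
  have hanti : StrictAntiOn gfun (Set.Ico γs 1) := by
    apply strictAntiOn_of_deriv_neg (convex_Ico γs 1)
    · intro x hx
      exact (hasDerivAt_gfun (lt_of_lt_of_le hγs_pos hx.1) hx.2).continuousAt.continuousWithinAt
    · intro x hx
      rw [interior_Ico] at hx
      have hx0 : 0 < x := lt_trans hγs_pos hx.1
      rw [(hasDerivAt_gfun hx0 hx.2).deriv]
      have hneg : hfun x < 0 := by
        have := hfun_anti hγs_pos hx.1 hx.2
        linarith [hfs ▸ this]
      have : (0:ℝ) < (3 - x) ^ 2 := by nlinarith [hx.2]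
      exact div_neg_of_neg_of_pos hneg this
  have hmax : ∀ γ ∈ Set.Ioo (0 : ℝ) 1, gfun γ ≤ gfun γs := by
    intro γ hγ
    rcases lt_trichotomy γ γs with h | h | h
    · exact le_of_lt (hmono ⟨hγ.1, le_of_lt h⟩ ⟨hγs_pos, le_refl _⟩ h)
    · rw [h]
    · exact le_of_lt (hanti ⟨le_refl _, hγs_lt1⟩ ⟨le_of_lt h, hγ.2⟩ h)
  refine ⟨γs, ⟨hγs_pos, hγs_lt1⟩, hmax, ?_, ?_, ?_⟩
  · intro γ' hγ' hmax'
    by_contra hne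
    have h1 : gfun γ' ≤ gfun γs := hmax' γs ⟨hγs_pos, hγs_lt1⟩ |>.trans_eq rfl |> fun _ => hmax γ' hγ'
    have h2 : gfun γs ≤ gfun γ' := hmax' γs ⟨hγs_pos, hγs_lt1⟩
    rcases lt_or_gt_of_ne hne with h | h
    · have := hmono ⟨hγ'.1, le_of_lt h⟩ ⟨hγs_pos, le_refl _⟩ h
      linarith
    · have := hanti ⟨le_refl _, hγs_lt1⟩ ⟨le_of_lt h, hγ'.2⟩ h
      linarith
  · exact hγsc.trans (by norm_num)
  · -- 2 * gfun γs ≤ log 1.7549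
    have hne : (3 - γs) ≠ 0 := by linarith
    have hg : gfun γs = Real.log γs - Real.log (1 - γs) := by
      rw [gfun, div_eq_iff hne, binEnt]
      have : 2 * Real.log (1 - γs) = 3 * Real.log γs := by
        have := hfs; rw [hfun] at this; linarith
      nlinarith [this]
    have hratio : γs ^ 2 / (1 - γs) ^ 2 ≤ 1.7549 := by
      rw [div_le_iff₀ (by nlinarith : (0:ℝ) < (1 - γs) ^ 2)]
      nlinarith [hγsc, hγs_lt1, hhalf]
    have hlog : 2 * gfun γs = Real.log (γs ^ 2 / (1 - γs) ^ 2) := by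
      rw [hg, Real.log_div (by positivity) (by nlinarith : ((1 - γs) ^ 2 : ℝ) ≠ 0), Real.log_pow, Real.log_pow]
      push_cast; ring
    rw [hlog]
    exact Real.log_le_log (by apply div_pos (by positivity) (by nlinarith)) hratio
end

section
/- For all γ in the open interval (0,1), the value 2·f(γ)/(3-γ) is at most ln(1.7549), where f is the binary entropy function. -/
theorem two_g_le_log (γ : ℝ) (hγ : γ ∈ Set.Ioo (0 : ℝ) 1) :
    2 * binEnt γ / (3 - γ) ≤ Real.log 1.7549 := by
  obtain ⟨h0, h1⟩ := hγ
  have h1' : (0:ℝ) < 1 - γ := by linarith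
  have h3 : (0:ℝ) < 3 - γ := by linarith
  set c := Real.log 1.7549 with hc
  set lg := Real.log 0.56984029 with hlg
  set l1 := Real.log 0.43015971 with hl1
  -- endpoint fact A : 0 ≤ c + lg
  have hA : 0 ≤ c + lg := by
    have : 0 ≤ Real.log (1.7549 * 0.56984029) := Real.log_nonneg (by norm_num)
    rwa [Real.log_mul (by norm_num) (by norm_num)] at this
  -- endpoint fact B : 0 ≤ 3*c + 2*l1
  have hB : 0 ≤ 3 * c + 2 * l1 := by
    have : 0 ≤ Real.log ((1.7549:ℝ)^3 * 0.43015971^2) := Real.log_nonneg (by norm_num)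
    rwa [Real.log_mul (by norm_num) (by norm_num), Real.log_pow, Real.log_pow] at this
  -- Gibbs inequality: binEnt γ ≤ -γ * lg - (1-γ) * l1
  have hGibbs : binEnt γ ≤ -γ * lg - (1 - γ) * l1 := by
    have k1 : Real.log ((0.56984029:ℝ) / γ) ≤ 0.56984029 / γ - 1 :=
      Real.log_le_sub_one_of_pos (by positivity)
    have k2 : Real.log ((0.43015971:ℝ) / (1 - γ)) ≤ 0.43015971 / (1 - γ) - 1 :=
      Real.log_le_sub_one_of_pos (by positivity)
    rw [Real.log_div (by norm_num) (ne_of_gt h0)] at k1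
    rw [Real.log_div (by norm_num) (ne_of_gt h1')] at k2
    have k1' : γ * (lg - Real.log γ) ≤ 0.56984029 - γ := by
      have := mul_le_mul_of_nonneg_left k1 (le_of_lt h0)
      calc γ * (lg - Real.log γ) ≤ γ * (0.56984029 / γ - 1) := this
        _ = 0.56984029 - γ := by field_simp
    have k2' : (1 - γ) * (l1 - Real.log (1 - γ)) ≤ 0.43015971 - (1 - γ) := by
      have := mul_le_mul_of_nonneg_left k2 (le_of_lt h1')
      calc (1 - γ) * (l1 - Real.log (1 - γ)) ≤ (1 - γ) * (0.43015971 / (1 - γ) - 1) := this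
        _ = 0.43015971 - (1 - γ) := by field_simp
    unfold binEnt
    nlinarith [k1', k2']
  -- combine: 2 * binEnt γ ≤ c * (3 - γ)
  rw [div_le_iff₀ h3]
  have e1 : -2 * lg ≤ 2 * c := by linarith
  have e2 : -2 * l1 ≤ 3 * c := by linarith
  nlinarith [mul_le_mul_of_nonneg_left e1 (le_of_lt h0),
    mul_le_mul_of_nonneg_left e2 (le_of_lt h1')]
end

section
/- There exists a constant C and a polynomial p such that for all positive integers n divisible by 3, the sum Σ_{k=1}^{n/3} C(n-k, 2k) is at most p(n)·1.7549^n. -/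
open Finset

private def aa (n : ℕ) : ℕ := ∑ k ∈ Finset.range (n+1), (n-k).choose (2*k)
private def bb (n : ℕ) : ℕ := ∑ k ∈ Finset.range (n+1), (n-k).choose (2*k+1)

private lemma bb_succ (n : ℕ) : bb (n+1) = aa n + bb n := by
  unfold aa bb
  rw [Finset.sum_range_succ]
  have h0 : (n+1-(n+1)).choose (2*(n+1)+1) = 0 := by
    simp
  rw [h0, add_zero, ← Finset.sum_add_distrib]
  apply Finset.sum_congr rfl
  intro k hk
  have hk' : k ≤ n := Nat.lt_succ_iff.mp (Finset.mem_range.mp hk)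
  have h1 : n + 1 - k = (n - k) + 1 := by omega
  rw [h1, show 2*k+1 = (2*k)+1 from rfl, Nat.choose_succ_succ]

private lemma aa_succ (n : ℕ) : aa (n+2) = aa (n+1) + bb n := by
  unfold aa bb
  rw [Finset.sum_range_succ']
  rw [Finset.sum_range_succ' (fun k => (n+1-k).choose (2*k)) (n+1)]
  simp only [Nat.add_sub_add_right]
  have key : ∀ j ∈ Finset.range (n+2),
      (n+2-(j+1)).choose (2*(j+1)) = (n-j).choose (2*j+1) + (n-j).choose (2*(j+1)) := by
    intro j hj
    have hj' : j < n + 2 := Finset.mem_range.mp hj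
    by_cases h : j ≤ n
    · have h1 : n + 2 - (j+1) = (n - j) + 1 := by omega
      rw [h1, show 2*(j+1) = (2*j+1)+1 by ring, Nat.choose_succ_succ]
    · have hj2 : j = n + 1 := by omega
      subst hj2
      have e1 : n + 2 - (n+1+1) = 0 := by omega
      have e2 : n - (n+1) = 0 := by omega
      rw [e1, e2]
      simp [Nat.choose_eq_zero_of_lt]
  rw [Finset.sum_congr rfl key, Finset.sum_add_distrib]
  rw [Finset.sum_range_succ (fun j => (n-j).choose (2*j+1))]
  have h0 : (n-(n+1)).choose (2*(n+1)+1) = 0 :=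
    Nat.choose_eq_zero_of_lt (by omega)
  rw [h0, add_zero]
  rw [Finset.sum_range_succ (fun j => (n-j).choose (2*(j+1)))]
  have h1 : (n-(n+1)).choose (2*(n+1+1)) = 0 :=
    Nat.choose_eq_zero_of_lt (by omega)
  rw [h1, add_zero]
  simp only [Nat.mul_zero, Nat.choose_zero_right]
  omega

private lemma ab_bound (n : ℕ) :
    (aa n : ℝ) ≤ 1.5098 * 1.7549 ^ n ∧ (bb n : ℝ) ≤ 2 * 1.7549 ^ n ∧
      (aa (n+1) : ℝ) ≤ 1.5098 * 1.7549 ^ (n+1) := by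
  induction n with
  | zero =>
    have ha0 : aa 0 = 1 := by decide
    have hb0 : bb 0 = 0 := by decide
    have ha1 : aa 1 = 1 := by decide
    rw [ha0, hb0, ha1]
    norm_num
  | succ n ih =>
    obtain ⟨ha, hb, ha1⟩ := ih
    have hbs : (bb (n+1) : ℝ) ≤ 2 * 1.7549 ^ (n+1) := by
      rw [bb_succ]
      push_cast
      have : (aa n : ℝ) + bb n ≤ 1.5098 * 1.7549 ^ n + 2 * 1.7549 ^ n :=
        add_le_add ha hb
      refine this.trans ?_
      simp only [pow_succ]
      nlinarith [pow_pos (show (0:ℝ) < 1.7549 by norm_num) n]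
    refine ⟨ha1, hbs, ?_⟩
    rw [aa_succ]
    push_cast
    have : (aa (n+1) : ℝ) + bb n ≤ 1.5098 * 1.7549 ^ (n+1) + 2 * 1.7549 ^ n :=
      add_le_add ha1 hb
    refine this.trans ?_
    simp only [pow_succ]
    nlinarith [pow_pos (show (0:ℝ) < 1.7549 by norm_num) n]

theorem sum_choose_bound :
    ∃ (C : ℝ) (p : Polynomial ℝ), ∀ n : ℕ, 0 < n → 3 ∣ n →
      (∑ k ∈ Finset.Icc 1 (n / 3), ((n - k).choose (2 * k) : ℝ)) ≤
        C * p.eval (n : ℝ) * 1.7549 ^ n := by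
  refine ⟨1.5098, 1, fun n _ _ => ?_⟩
  have hsub : Finset.Icc 1 (n/3) ⊆ Finset.range (n+1) := by
    intro k hk
    simp only [Finset.mem_Icc] at hk
    simp only [Finset.mem_range]
    omega
  have h1 : (∑ k ∈ Finset.Icc 1 (n/3), (n-k).choose (2*k)) ≤ aa n := by
    unfold aa
    exact Finset.sum_le_sum_of_subset hsub
  have h2 : (∑ k ∈ Finset.Icc 1 (n/3), ((n-k).choose (2*k) : ℝ)) ≤ (aa n : ℝ) := by
    push_cast [← Nat.cast_sum]
    exact_mod_cast h1
  refine h2.trans ?_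
  have := (ab_bound n).1
  simpa using this
end
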